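/- For the dilated discrete Fourier transform F_{N,α} with dilation α ∈ [1,M], one has the operator norm bound ‖F_{N,α}‖ ≤ C √(log N) for some absolute constant C. -/

import Mathlib

/-- The dilated discrete Fourier transform matrix
`(F_{N,α})_{jℓ} = N^{-1/2} exp(-2πi α jℓ/N)`. -/
noncomputable def dftDilMat (N : ℕ) (α : ℝ) : Matrix (Fin N) (Fin N) ℂ :=
  Matrix.of fun j ℓ => ((N : ℂ) ^ (-(1/2 : ℂ))) *
    Complex.exp (-2 * Real.pi * Complex.I * (α : ℂ) * ((j : ℕ) : ℂ) * ((ℓ : ℕ) : ℂ) / (N : ℂ))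

namespace Stmt13Aux

open Finset Complex Matrix

lemma sum_one_div_max_le (W : ℕ) :
    ∑ j ∈ Finset.range W, 1 / max 1 (j : ℝ) ≤ 2 + Real.log W := by
  cases W with
  | zero => simp
  | succ V =>
    have h1 : ∑ j ∈ Finset.range (V + 1), 1 / max 1 (j : ℝ)
        = 1 + (harmonic V : ℝ) := by
      rw [Finset.sum_range_succ']
      have : ∀ i : ℕ, 1 / max 1 ((i + 1 : ℕ) : ℝ) = (((i : ℕ) + 1 : ℝ))⁻¹ := by
        intro i
        rw [max_eq_right (by push_cast; linarith [Nat.cast_nonneg (α := ℝ) i])]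
        push_cast
        rw [one_div]
      simp only [this]
      rw [harmonic]
      push_cast
      simp [add_comm]
    rw [h1]
    have h2 := harmonic_le_one_add_log V
    have h3 : Real.log V ≤ Real.log (V + 1) := by
      rcases Nat.eq_zero_or_pos V with h | h
      · simp [h]
      · exact Real.log_le_log (by positivity) (by push_cast; linarith)
    push_cast
    linarith

lemma sum_inv_dist_le (N W : ℕ) (y : ℝ) (h1 : (N : ℝ) - W ≤ y) (h2 : y ≤ (W : ℝ) - 1) :
    ∑ i ∈ Finset.range N, 1 / max 1 |(i : ℝ) - y| ≤ 2 * (2 + Real.log W) := by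
  set c : ℤ := ⌈y⌉ with hc
  have hyc : y ≤ (c : ℝ) := Int.le_ceil y
  have hcy : (c : ℝ) - 1 ≤ y := by
    have := Int.ceil_lt_add_one y
    linarith
  -- generic: sum of 1/max(1, f i) over S with f injective, values < W
  have main : ∀ (S : Finset ℕ) (f : ℕ → ℕ), Set.InjOn f S → (∀ i ∈ S, f i < W) →
      ∑ i ∈ S, 1 / max 1 ((f i : ℕ) : ℝ) ≤ 2 + Real.log W := by
    intro S f hinj hlt
    have himg := Finset.sum_image (s := S) (g := f)
      (f := fun j : ℕ => 1 / max 1 ((j : ℕ) : ℝ))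
      (fun i hi j hj hij => hinj hi hj hij)
    refine le_trans (le_of_eq himg.symm)
      (le_trans (Finset.sum_le_sum_of_subset_of_nonneg ?_ ?_) (sum_one_div_max_le W))
    · intro j hj
      rw [Finset.mem_image] at hj
      obtain ⟨i, hi, rfl⟩ := hj
      exact Finset.mem_range.mpr (hlt i hi)
    · intro j _ _
      positivity
  rw [← Finset.sum_filter_add_sum_filter_not (Finset.range N) (fun i : ℕ => c ≤ (i : ℤ))]
  have hbound1 : ∑ i ∈ (Finset.range N).filter (fun i : ℕ => c ≤ (i : ℤ)), 1 / max 1 |(i : ℝ) - y|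
      ≤ 2 + Real.log W := by
    refine le_trans (Finset.sum_le_sum (f := fun i : ℕ => 1 / max 1 |(i : ℝ) - y|)
      (g := fun i : ℕ => 1 / max 1 ((((i : ℤ) - c).toNat : ℕ) : ℝ)) ?_) ?_
    · intro i hi
      rw [Finset.mem_filter] at hi
      obtain ⟨hiN, hci⟩ := hi
      have hnn : (0 : ℤ) ≤ (i : ℤ) - c := by omega
      have hcast : ((((i : ℤ) - c).toNat : ℕ) : ℝ) = (i : ℝ) - (c : ℝ) := by
        rw [← Int.cast_natCast, Int.toNat_of_nonneg hnn]
        push_cast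
        ring
      apply one_div_le_one_div_of_le
      · positivity
      · rw [hcast]
        exact max_le_max le_rfl (le_trans (by linarith) (le_abs_self _))
    · refine main _ _ ?_ ?_
      · intro i hi j hj hij
        simp only [Finset.coe_filter, Set.mem_setOf_eq, Finset.mem_range] at hi hj
        dsimp only at hij
        omega
      · intro i hi
        rw [Finset.mem_filter, Finset.mem_range] at hi
        obtain ⟨hiN, hci⟩ := hi
        have : ((i : ℤ) - c : ℝ) < W := by
          push_cast
          have : (i : ℝ) ≤ (N : ℝ) - 1 := by
            have : (i : ℝ) + 1 ≤ N := by exact_mod_cast hiN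
            linarith
          linarith
        have : (i : ℤ) - c < (W : ℤ) := by exact_mod_cast this
        omega
  have hbound2 : ∑ i ∈ (Finset.range N).filter (fun i : ℕ => ¬ c ≤ (i : ℤ)), 1 / max 1 |(i : ℝ) - y|
      ≤ 2 + Real.log W := by
    refine le_trans (Finset.sum_le_sum (f := fun i : ℕ => 1 / max 1 |(i : ℝ) - y|)
      (g := fun i : ℕ => 1 / max 1 (((c - 1 - (i : ℤ)).toNat : ℕ) : ℝ)) ?_) ?_
    · intro i hi
      rw [Finset.mem_filter] at hi
      obtain ⟨hiN, hci⟩ := hi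
      have hlt : (i : ℤ) < c := by omega
      have hnn : (0 : ℤ) ≤ c - 1 - i := by omega
      have hcast : (((c - 1 - (i : ℤ)).toNat : ℕ) : ℝ) = (c : ℝ) - 1 - (i : ℝ) := by
        rw [← Int.cast_natCast, Int.toNat_of_nonneg hnn]
        push_cast
        ring
      apply one_div_le_one_div_of_le
      · positivity
      · rw [hcast]
        have habs : (c : ℝ) - 1 - (i : ℝ) ≤ |(i : ℝ) - y| := by
          rw [abs_sub_comm]
          exact le_trans (by linarith) (le_abs_self _)
        exact max_le_max le_rfl habs
    · refine main _ _ ?_ ?_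
      · intro i hi j hj hij
        simp only [Finset.coe_filter, Set.mem_setOf_eq, Finset.mem_range] at hi hj
        dsimp only at hij
        omega
      · intro i hi
        rw [Finset.mem_filter, Finset.mem_range] at hi
        obtain ⟨hiN, hci⟩ := hi
        have h0 : ((c : ℝ) - 1 - (i : ℤ) : ℝ) < W := by
          push_cast
          have : (0 : ℝ) ≤ i := Nat.cast_nonneg i
          linarith
        have : c - 1 - (i : ℤ) < (W : ℤ) := by exact_mod_cast h0
        omega
  linarith


lemma two_mul_abs_sub_round_le (t : ℝ) : 2 * |t - round t| ≤ |Real.sin (Real.pi * t)| := by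
  have h1 : |t - round t| ≤ 1 / 2 := abs_sub_round t
  have hpi : (0 : ℝ) < Real.pi := Real.pi_pos
  have hsin : Real.sin (Real.pi * t)
      = (-1) ^ (round t) * Real.sin (Real.pi * (t - round t)) := by
    have := Real.sin_add_int_mul_pi (Real.pi * (t - round t)) (round t)
    rw [← this]
    ring_nf
  have habs : |Real.sin (Real.pi * t)| = |Real.sin (Real.pi * (t - round t))| := by
    rw [hsin, abs_mul]
    have : |((-1 : ℝ)) ^ (round t)| = 1 := by
      rcases Int.even_or_odd (round t) with h | h
      · rw [h.neg_one_zpow]; simp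
      · rw [Odd.neg_one_zpow h]; simp
    rw [this, one_mul]
  rw [habs]
  have hle : |Real.pi * (t - round t)| ≤ Real.pi / 2 := by
    rw [abs_mul, abs_of_pos hpi]
    nlinarith
  have h3 := Real.mul_abs_le_abs_sin hle
  rw [abs_mul, abs_of_pos hpi] at h3
  have h2 : 2 / Real.pi * (Real.pi * |t - round t|) = 2 * |t - round t| := by
    field_simp
  linarith [h2 ▸ h3]

lemma norm_exp_mul_I_sub_one (φ : ℝ) :
    ‖Complex.exp ((φ : ℂ) * Complex.I) - 1‖ = 2 * |Real.sin (φ / 2)| := by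
  have e1 : Complex.exp ((φ : ℂ) * Complex.I)
      = Complex.exp (((φ / 2 : ℝ) : ℂ) * Complex.I)
        * Complex.exp (((φ / 2 : ℝ) : ℂ) * Complex.I) := by
    rw [← Complex.exp_add]
    congr 1
    push_cast
    ring
  have e2 : Complex.exp (-((φ / 2 : ℝ) : ℂ) * Complex.I)
      * Complex.exp (((φ / 2 : ℝ) : ℂ) * Complex.I) = 1 := by
    rw [← Complex.exp_add]
    simp
  have key : Complex.exp ((φ : ℂ) * Complex.I) - 1
      = Complex.exp (((φ / 2 : ℝ) : ℂ) * Complex.I)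
        * (2 * Complex.sin ((φ / 2 : ℝ) : ℂ) * Complex.I) := by
    rw [Complex.sin, e1]
    linear_combination e2 + (Complex.exp (((φ / 2 : ℝ) : ℂ) * Complex.I) ^ 2
      - Complex.exp (((φ / 2 : ℝ) : ℂ) * Complex.I)
        * Complex.exp (-((φ / 2 : ℝ) : ℂ) * Complex.I)) * Complex.I_sq
  rw [key, norm_mul, norm_mul, norm_mul, Complex.norm_exp_ofReal_mul_I,
    ← Complex.ofReal_sin, Complex.norm_real, Complex.norm_I]
  norm_num


lemma dftDilMat_apply (N : ℕ) (α : ℝ) (j ℓ : Fin N) :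
    dftDilMat N α j ℓ = (((N : ℝ) ^ (-(1/2 : ℝ)) : ℝ) : ℂ) *
      Complex.exp (((-(2 * Real.pi * α * ((j : ℕ) : ℝ) * ((ℓ : ℕ) : ℝ)) / N : ℝ) : ℂ)
        * Complex.I) := by
  have hc : ((N : ℂ) ^ (-(1/2 : ℂ))) = (((N : ℝ) ^ (-(1/2 : ℝ)) : ℝ) : ℂ) := by
    rw [Complex.ofReal_cpow (Nat.cast_nonneg N)]
    push_cast
    norm_num
  rw [dftDilMat, Matrix.of_apply, hc]
  congr 1
  push_cast
  ring

lemma entry_eq (N : ℕ) (α : ℝ) (ℓ ℓ' : Fin N) :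
    ((dftDilMat N α)ᴴ * dftDilMat N α) ℓ ℓ' =
      ((N : ℝ)⁻¹ : ℝ) * ∑ j ∈ Finset.range N,
        Complex.exp (((2 * Real.pi * α * (((ℓ : ℕ) : ℝ) - ((ℓ' : ℕ) : ℝ)) / N : ℝ) : ℂ)
          * Complex.I) ^ j := by
  have hstar : ∀ x : ℝ, (starRingEnd ℂ) (Complex.exp ((x : ℂ) * Complex.I))
      = Complex.exp (((-x : ℝ) : ℂ) * Complex.I) := by
    intro x
    rw [← Complex.exp_conj]
    congr 1
    simp [Complex.conj_I]
  have hC : (((N : ℝ) ^ (-(1/2 : ℝ)) : ℝ) : ℂ) * (((N : ℝ) ^ (-(1/2 : ℝ)) : ℝ) : ℂ)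
      = (((N : ℝ)⁻¹ : ℝ) : ℂ) := by
    rw [← Complex.ofReal_mul]
    congr 1
    rw [← Real.rpow_add' (Nat.cast_nonneg N) (by norm_num)]
    norm_num
    exact Real.rpow_neg_one _
  have hterm : ∀ j : Fin N,
      (starRingEnd ℂ) (dftDilMat N α j ℓ) * dftDilMat N α j ℓ'
      = ((N : ℝ)⁻¹ : ℝ) *
        Complex.exp (((2 * Real.pi * α * (((ℓ : ℕ) : ℝ) - ((ℓ' : ℕ) : ℝ)) / N : ℝ) : ℂ)
          * Complex.I) ^ (j : ℕ) := by
    intro j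
    rw [dftDilMat_apply, dftDilMat_apply, _root_.map_mul, Complex.conj_ofReal, hstar]
    rw [mul_mul_mul_comm, hC, ← Complex.exp_add, ← Complex.exp_nat_mul]
    congr 1
    push_cast
    ring
  rw [Matrix.mul_apply]
  simp only [Matrix.conjTranspose_apply]
  calc ∑ j : Fin N, (starRingEnd ℂ) (dftDilMat N α j ℓ) * dftDilMat N α j ℓ'
      = ∑ j : Fin N, ((N : ℝ)⁻¹ : ℝ) *
          Complex.exp (((2 * Real.pi * α * (((ℓ : ℕ) : ℝ) - ((ℓ' : ℕ) : ℝ)) / N : ℝ) : ℂ)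
            * Complex.I) ^ (j : ℕ) := Finset.sum_congr rfl (fun j _ => hterm j)
    _ = ((N : ℝ)⁻¹ : ℝ) * ∑ j : Fin N,
          Complex.exp (((2 * Real.pi * α * (((ℓ : ℕ) : ℝ) - ((ℓ' : ℕ) : ℝ)) / N : ℝ) : ℂ)
            * Complex.I) ^ (j : ℕ) := by rw [← Finset.mul_sum]
    _ = _ := by
          rw [Fin.sum_univ_eq_sum_range (fun j =>
            Complex.exp (((2 * Real.pi * α * (((ℓ : ℕ) : ℝ) - ((ℓ' : ℕ) : ℝ)) / N : ℝ) : ℂ)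
              * Complex.I) ^ j)]

lemma entry_norm_le (N : ℕ) (hN : 2 ≤ N) (α : ℝ) (hα : 1 ≤ α) (ℓ ℓ' : Fin N) :
    ‖((dftDilMat N α)ᴴ * dftDilMat N α) ℓ ℓ'‖ ≤
      1 / max 1 |(((ℓ : ℕ) : ℝ) - ((ℓ' : ℕ) : ℝ)) -
        (round (α * ((((ℓ : ℕ) : ℝ) - ((ℓ' : ℕ) : ℝ)) / N)) : ℤ) * N / α| := by
  have hNpos : (0 : ℝ) < N := by positivity
  have hαpos : (0 : ℝ) < α := by linarith
  set D : ℝ := ((ℓ : ℕ) : ℝ) - ((ℓ' : ℕ) : ℝ) with hD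
  set t : ℝ := α * (D / N) with ht
  set m : ℤ := round t with hm
  set x : ℝ := (m : ℝ) * N / α with hx
  set φ : ℝ := 2 * Real.pi * α * D / N with hφ
  set w : ℂ := Complex.exp ((φ : ℂ) * Complex.I) with hw
  have hsum : ‖((dftDilMat N α)ᴴ * dftDilMat N α) ℓ ℓ'‖ = (N : ℝ)⁻¹ * ‖∑ j ∈ Finset.range N, w ^ j‖ := by
    rw [entry_eq, norm_mul, Complex.norm_real, Real.norm_eq_abs,
      abs_of_pos (by positivity)]
  -- |t - m| = (α/N) * |D - x|
  have htm : t - m = α / N * (D - x) := by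
    rw [ht, hx]
    field_simp
  -- trivial bound
  have htriv : ‖((dftDilMat N α)ᴴ * dftDilMat N α) ℓ ℓ'‖ ≤ 1 := by
    rw [hsum]
    have : ‖∑ j ∈ Finset.range N, w ^ j‖ ≤ (N : ℝ) := by
      refine le_trans (norm_sum_le _ _) ?_
      have : ∀ j ∈ Finset.range N, ‖w ^ j‖ = 1 := by
        intro j _
        rw [norm_pow, hw, Complex.norm_exp_ofReal_mul_I, one_pow]
      rw [Finset.sum_congr rfl this]
      simp
    calc (N : ℝ)⁻¹ * ‖∑ j ∈ Finset.range N, w ^ j‖ ≤ (N : ℝ)⁻¹ * N := by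
          exact mul_le_mul_of_nonneg_left this (by positivity)
      _ = 1 := by field_simp
  rcases le_or_gt |D - x| 1 with hcase | hcase
  · rw [max_eq_left (by linarith [abs_nonneg (D - x)])]
    simpa using htriv
  · rw [max_eq_right hcase.le]
    -- here w ≠ 1, use geometric sum
    have hsin : 2 * |t - m| ≤ |Real.sin (Real.pi * t)| := two_mul_abs_sub_round_le t
    have htm' : |t - m| = α / N * |D - x| := by
      rw [htm, abs_mul, abs_of_pos (by positivity)]
    have hsinpos : 0 < |Real.sin (Real.pi * t)| := by
      rw [htm'] at hsin
      have : 0 < α / N * |D - x| := by positivity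
      linarith
    have hφ2 : φ / 2 = Real.pi * t := by
      rw [hφ, ht]
      ring
    have hwne : w ≠ 1 := by
      intro h
      have : ‖w - 1‖ = 0 := by rw [h]; simp
      rw [hw, norm_exp_mul_I_sub_one, hφ2] at this
      linarith
    have hw1 : ‖w - 1‖ = 2 * |Real.sin (Real.pi * t)| := by
      rw [hw, norm_exp_mul_I_sub_one, hφ2]
    have hgeom : ‖∑ j ∈ Finset.range N, w ^ j‖ ≤ 2 / ‖w - 1‖ := by
      rw [geom_sum_eq hwne]
      rw [norm_div]
      have h1 : ‖w ^ N - 1‖ ≤ 2 := by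
        refine le_trans (norm_sub_le _ _) ?_
        have : ‖w ^ N‖ = 1 := by
          rw [norm_pow, hw, Complex.norm_exp_ofReal_mul_I, one_pow]
        rw [this]
        norm_num
      have hwpos : 0 < ‖w - 1‖ := by
        rw [hw1]; linarith
      gcongr
    have hwpos : 0 < ‖w - 1‖ := by rw [hw1]; linarith
    have hsin2 : 2 * α * |D - x| ≤ (N : ℝ) * |Real.sin (Real.pi * t)| := by
      rw [htm'] at hsin
      have hNne : (N : ℝ) ≠ 0 := by positivity
      have := mul_le_mul_of_nonneg_left hsin (le_of_lt hNpos)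
      calc 2 * α * |D - x| = (N : ℝ) * (2 * (α / N * |D - x|)) := by field_simp
        _ ≤ (N : ℝ) * |Real.sin (Real.pi * t)| := this
    calc ‖((dftDilMat N α)ᴴ * dftDilMat N α) ℓ ℓ'‖ = (N : ℝ)⁻¹ * ‖∑ j ∈ Finset.range N, w ^ j‖ := hsum
      _ ≤ (N : ℝ)⁻¹ * (2 / ‖w - 1‖) := by
          exact mul_le_mul_of_nonneg_left hgeom (by positivity)
      _ = 1 / ((N : ℝ) * |Real.sin (Real.pi * t)|) := by
          rw [hw1]
          field_simp
      _ ≤ 1 / (2 * α * |D - x|) := by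
          apply one_div_le_one_div_of_le
          · positivity
          · exact hsin2
      _ ≤ 1 / |D - x| := by
          apply one_div_le_one_div_of_le
          · linarith
          · nlinarith [abs_nonneg (D - x)]


lemma schur_bound {n : ℕ} (B : Matrix (Fin n) (Fin n) ℂ) (K : ℝ) (hK : 0 ≤ K)
    (h1 : ∀ i, ∑ j, ‖B i j‖ ≤ K) (h2 : ∀ j, ∑ i, ‖B i j‖ ≤ K) :
    ‖LinearMap.toContinuousLinearMap (Matrix.toEuclideanLin B)‖ ≤ K := by
  refine ContinuousLinearMap.opNorm_le_bound _ hK (fun u => ?_)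
  rw [LinearMap.coe_toContinuousLinearMap']
  have happ : ∀ i, (Matrix.toEuclideanLin B u : EuclideanSpace ℂ (Fin n)) i
      = ∑ j, B i j * u j := by
    intro i
    rw [Matrix.toEuclideanLin_apply]
    rfl
  have hu2 : ‖u‖ ^ 2 = ∑ j, ‖u j‖ ^ 2 := by
    rw [EuclideanSpace.norm_eq, Real.sq_sqrt]
    positivity
  rw [show K * ‖u‖ = Real.sqrt ((K * ‖u‖) ^ 2) from (Real.sqrt_sq (by positivity)).symm,
    EuclideanSpace.norm_eq]
  apply Real.sqrt_le_sqrt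
  simp only [happ]
  have hCS : ∀ i : Fin n, (∑ j, ‖B i j‖ * ‖u j‖) ^ 2
      ≤ (∑ j, ‖B i j‖) * (∑ j, ‖B i j‖ * ‖u j‖ ^ 2) := by
    intro i
    have := Finset.sum_mul_sq_le_sq_mul_sq Finset.univ
      (fun j => Real.sqrt ‖B i j‖) (fun j => Real.sqrt ‖B i j‖ * ‖u j‖)
    calc (∑ j, ‖B i j‖ * ‖u j‖) ^ 2
        = (∑ j, Real.sqrt ‖B i j‖ * (Real.sqrt ‖B i j‖ * ‖u j‖)) ^ 2 := by
          congr 1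
          refine Finset.sum_congr rfl (fun j _ => ?_)
          rw [← mul_assoc, Real.mul_self_sqrt (norm_nonneg _)]
      _ ≤ (∑ j, Real.sqrt ‖B i j‖ ^ 2) * (∑ j, (Real.sqrt ‖B i j‖ * ‖u j‖) ^ 2) := this
      _ = (∑ j, ‖B i j‖) * (∑ j, ‖B i j‖ * ‖u j‖ ^ 2) := by
          congr 1
          · exact Finset.sum_congr rfl (fun j _ => Real.sq_sqrt (norm_nonneg _))
          · refine Finset.sum_congr rfl (fun j _ => ?_)
            rw [mul_pow, Real.sq_sqrt (norm_nonneg _)]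
  calc ∑ i, ‖∑ j, B i j * u j‖ ^ 2
      ≤ ∑ i, (∑ j, ‖B i j‖ * ‖u j‖) ^ 2 := by
        refine Finset.sum_le_sum (fun i _ => ?_)
        have : ‖∑ j, B i j * u j‖ ≤ ∑ j, ‖B i j‖ * ‖u j‖ := by
          refine le_trans (norm_sum_le _ _) (Finset.sum_le_sum (fun j _ => ?_))
          rw [norm_mul]
        exact pow_le_pow_left₀ (norm_nonneg _) this 2
    _ ≤ ∑ i, (∑ j, ‖B i j‖) * (∑ j, ‖B i j‖ * ‖u j‖ ^ 2) :=
        Finset.sum_le_sum (fun i _ => hCS i)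
    _ ≤ ∑ i, K * (∑ j, ‖B i j‖ * ‖u j‖ ^ 2) := by
        refine Finset.sum_le_sum (fun i _ => ?_)
        refine mul_le_mul_of_nonneg_right (h1 i) ?_
        positivity
    _ = K * ∑ j, (∑ i, ‖B i j‖) * ‖u j‖ ^ 2 := by
        rw [← Finset.mul_sum, Finset.sum_comm]
        congr 1
        refine Finset.sum_congr rfl (fun j _ => ?_)
        rw [Finset.sum_mul]
    _ ≤ K * ∑ j, K * ‖u j‖ ^ 2 := by
        refine mul_le_mul_of_nonneg_left (Finset.sum_le_sum (fun j _ => ?_)) hK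
        exact mul_le_mul_of_nonneg_right (h2 j) (by positivity)
    _ = (K * ‖u‖) ^ 2 := by
        rw [← Finset.mul_sum, ← hu2]
        ring

lemma norm_sq_eq {n : ℕ} (A : Matrix (Fin n) (Fin n) ℂ) :
    ‖LinearMap.toContinuousLinearMap (Matrix.toEuclideanLin A)‖ *
      ‖LinearMap.toContinuousLinearMap (Matrix.toEuclideanLin A)‖ =
        ‖LinearMap.toContinuousLinearMap (Matrix.toEuclideanLin (Aᴴ * A))‖ := by
  open scoped Matrix.Norms.L2Operator in
  have h := Matrix.l2_opNorm_conjTranspose_mul_self A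
  open scoped Matrix.Norms.L2Operator in
  rw [Matrix.l2_opNorm_def, Matrix.l2_opNorm_def, LinearEquiv.trans_apply,
    LinearEquiv.trans_apply] at h
  exact h.symm

end Stmt13Aux

open Stmt13Aux Finset Complex Matrix in
set_option maxHeartbeats 1600000 in
/-- For the dilated discrete Fourier transform with `α ∈ [1, M]` one has the operator
norm bound `‖F_{N,α}‖ ≤ C √(log N)`. -/
theorem stmt13 (M : ℝ) (hM : 1 ≤ M) :
    ∃ C : ℝ, 0 < C ∧ ∀ N : ℕ, 2 ≤ N → ∀ α : ℝ, 1 ≤ α → α ≤ M →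
      ‖LinearMap.toContinuousLinearMap (Matrix.toEuclideanLin (dftDilMat N α))‖ ≤
        C * Real.sqrt (Real.log N) := by
  set M₀ : ℕ := ⌈M⌉₊ + 1 with hM₀
  set b : ℝ := (2 * M₀ + 1) * 2 with hb
  set a : ℝ := b * (2 + Real.log (M₀ + 2)) with ha
  have hlog2 : (0 : ℝ) < Real.log 2 := Real.log_pos (by norm_num)
  have hbpos : 0 < b := by positivity
  have hanneg : 0 ≤ a := by
    have : (0:ℝ) ≤ Real.log (M₀ + 2) := Real.log_nonneg (by push_cast; linarith)
    positivity
  set C₁ : ℝ := a / Real.log 2 + b with hC₁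
  have hC₁pos : 0 < C₁ := by positivity
  refine ⟨Real.sqrt C₁, Real.sqrt_pos.mpr hC₁pos, ?_⟩
  intro N hN α hα1 hα2
  have hNpos : (0 : ℝ) < N := by positivity
  have hαpos : (0 : ℝ) < α := by linarith
  set A := dftDilMat N α with hA
  set W : ℕ := (M₀ + 2) * N with hW
  set K : ℝ := (2 * M₀ + 1) * (2 * (2 + Real.log W)) with hK
  have hWpos : 0 < W := by
    rw [hW]
    exact Nat.mul_pos (by omega) (by omega)
  have hlogWnn : (0:ℝ) ≤ Real.log W := Real.log_nonneg (by exact_mod_cast hWpos)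
  have hKnn : 0 ≤ K := by positivity
  -- row sums bound
  have hrow : ∀ ℓ : Fin N, ∑ ℓ' : Fin N, ‖(Aᴴ * A) ℓ ℓ'‖ ≤ K := by
    intro ℓ
    have hpoint : ∀ ℓ' : Fin N, ‖(Aᴴ * A) ℓ ℓ'‖ ≤
        ∑ m ∈ Finset.Icc (-(M₀ : ℤ)) (M₀ : ℤ),
          1 / max 1 |(((ℓ : ℕ) : ℝ) - ((ℓ' : ℕ) : ℝ)) - (m : ℝ) * N / α| := by
      intro ℓ'
      set D : ℝ := ((ℓ : ℕ) : ℝ) - ((ℓ' : ℕ) : ℝ) with hD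
      set m₀ : ℤ := round (α * (D / N)) with hm₀
      have hmem : m₀ ∈ Finset.Icc (-(M₀ : ℤ)) (M₀ : ℤ) := by
        have h1 : |α * (D / N) - m₀| ≤ 1 / 2 := abs_sub_round _
        have hDle : |D| ≤ (N : ℝ) - 1 := by
          rw [hD, abs_sub_le_iff]
          constructor
          · have h1 : ((ℓ : ℕ) : ℝ) ≤ (N : ℝ) - 1 := by
              have := ℓ.isLt
              have : ((ℓ : ℕ) : ℝ) + 1 ≤ N := by exact_mod_cast this
              linarith
            have h2 : (0:ℝ) ≤ ((ℓ' : ℕ) : ℝ) := Nat.cast_nonneg _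
            linarith
          · have h1 : ((ℓ' : ℕ) : ℝ) ≤ (N : ℝ) - 1 := by
              have := ℓ'.isLt
              have : ((ℓ' : ℕ) : ℝ) + 1 ≤ N := by exact_mod_cast this
              linarith
            have h2 : (0:ℝ) ≤ ((ℓ : ℕ) : ℝ) := Nat.cast_nonneg _
            linarith
        have ht : |α * (D / N)| ≤ M := by
          rw [abs_mul, abs_of_pos hαpos, abs_div, abs_of_pos hNpos]
          calc α * (|D| / N) ≤ α * 1 := by
                refine mul_le_mul_of_nonneg_left ?_ (le_of_lt hαpos)
                rw [div_le_one hNpos]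
                linarith
            _ = α := mul_one α
            _ ≤ M := hα2
        have hMM₀ : M ≤ (M₀ : ℝ) := by
          have := Nat.le_ceil M
          calc M ≤ (⌈M⌉₊ : ℝ) := Nat.le_ceil M
            _ ≤ (M₀ : ℝ) := by rw [hM₀]; push_cast; linarith
        have habs : |(m₀ : ℝ)| ≤ (M₀ : ℝ) + 1 / 2 := by
          have := abs_sub_abs_le_abs_sub (m₀ : ℝ) (α * (D / N))
          rw [abs_sub_comm] at h1
          calc |(m₀ : ℝ)| ≤ |α * (D / N)| + |(m₀ : ℝ) - α * (D / N)| := by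
                have := abs_sub_abs_le_abs_sub (m₀ : ℝ) (α * (D / N))
                linarith [abs_nonneg ((m₀ : ℝ) - α * (D / N))]
            _ ≤ M + 1 / 2 := by linarith
            _ ≤ (M₀ : ℝ) + 1 / 2 := by linarith
        rw [Finset.mem_Icc]
        have : |(m₀ : ℝ)| < (M₀ : ℝ) + 1 := by linarith
        have h4 : |m₀| < (M₀ : ℤ) + 1 := by exact_mod_cast this
        rw [abs_lt] at h4
        omega
      refine le_trans (entry_norm_le N hN α hα1 ℓ ℓ') ?_
      refine Finset.single_le_sum (f := fun m : ℤ =>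
        1 / max 1 |(((ℓ : ℕ) : ℝ) - ((ℓ' : ℕ) : ℝ)) - (m : ℝ) * N / α|) ?_ hmem
      intro m _
      positivity
    calc ∑ ℓ' : Fin N, ‖(Aᴴ * A) ℓ ℓ'‖
        ≤ ∑ ℓ' : Fin N, ∑ m ∈ Finset.Icc (-(M₀ : ℤ)) (M₀ : ℤ),
            1 / max 1 |(((ℓ : ℕ) : ℝ) - ((ℓ' : ℕ) : ℝ)) - (m : ℝ) * N / α| :=
          Finset.sum_le_sum (fun ℓ' _ => hpoint ℓ')
      _ = ∑ m ∈ Finset.Icc (-(M₀ : ℤ)) (M₀ : ℤ), ∑ ℓ' : Fin N,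
            1 / max 1 |(((ℓ : ℕ) : ℝ) - ((ℓ' : ℕ) : ℝ)) - (m : ℝ) * N / α| :=
          Finset.sum_comm
      _ ≤ ∑ m ∈ Finset.Icc (-(M₀ : ℤ)) (M₀ : ℤ), 2 * (2 + Real.log W) := by
          refine Finset.sum_le_sum (fun m hm => ?_)
          rw [Finset.mem_Icc] at hm
          have hmabs : |(m : ℝ)| ≤ (M₀ : ℝ) := by
            have : |m| ≤ (M₀ : ℤ) := abs_le.mpr hm
            exact_mod_cast this
          set y : ℝ := ((ℓ : ℕ) : ℝ) - (m : ℝ) * N / α with hy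
          have hrw : ∀ ℓ' : Fin N,
              1 / max 1 |(((ℓ : ℕ) : ℝ) - ((ℓ' : ℕ) : ℝ)) - (m : ℝ) * N / α|
              = 1 / max 1 |(((ℓ' : ℕ) : ℝ)) - y| := by
            intro ℓ'
            rw [hy, abs_sub_comm]
            congr 3
            ring
          have hWcast : (W : ℝ) = ((M₀ : ℝ) + 2) * N := by
            rw [hW]
            push_cast
            ring
          have hmN : |(m : ℝ) * N / α| ≤ (M₀ : ℝ) * N := by
            rw [abs_div, abs_mul, abs_of_pos hNpos, abs_of_pos hαpos]
            calc |(m : ℝ)| * N / α ≤ |(m : ℝ)| * N := by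
                  refine div_le_self (by positivity) hα1
              _ ≤ (M₀ : ℝ) * N := by
                  exact mul_le_mul_of_nonneg_right hmabs (le_of_lt hNpos)
          have hl1 : ((ℓ : ℕ) : ℝ) ≤ (N : ℝ) - 1 := by
            have := ℓ.isLt
            have : ((ℓ : ℕ) : ℝ) + 1 ≤ N := by exact_mod_cast this
            linarith
          have hl0 : (0 : ℝ) ≤ ((ℓ : ℕ) : ℝ) := Nat.cast_nonneg _
          have habs' := abs_le.mp hmN
          have hy1 : (N : ℝ) - W ≤ y := by
            rw [hy, hWcast]
            nlinarith
          have hy2 : y ≤ (W : ℝ) - 1 := by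
            rw [hy, hWcast]
            nlinarith
          calc ∑ ℓ' : Fin N,
              1 / max 1 |(((ℓ : ℕ) : ℝ) - ((ℓ' : ℕ) : ℝ)) - (m : ℝ) * N / α|
              = ∑ ℓ' : Fin N, 1 / max 1 |(((ℓ' : ℕ) : ℝ)) - y| :=
                Finset.sum_congr rfl (fun ℓ' _ => hrw ℓ')
            _ = ∑ i ∈ Finset.range N, 1 / max 1 |(i : ℝ) - y| :=
                Fin.sum_univ_eq_sum_range (fun i => 1 / max 1 |(i : ℝ) - y|) N
            _ ≤ 2 * (2 + Real.log W) := sum_inv_dist_le N W y hy1 hy2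
      _ = K := by
          rw [Finset.sum_const, Int.card_Icc]
          have : ((M₀ : ℤ) + 1 - (-(M₀ : ℤ))).toNat = 2 * M₀ + 1 := by omega
          rw [this, nsmul_eq_mul, hK]
          push_cast
          ring
  -- column sums
  have hcol : ∀ j : Fin N, ∑ i : Fin N, ‖(Aᴴ * A) i j‖ ≤ K := by
    intro j
    have heq : ∀ i : Fin N, ‖(Aᴴ * A) i j‖ = ‖(Aᴴ * A) j i‖ := by
      intro i
      have hherm := Matrix.isHermitian_conjTranspose_mul_self A
      have h := congr_fun (congr_fun hherm i) j
      rw [Matrix.conjTranspose_apply] at h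
      rw [← h, norm_star]
    rw [Finset.sum_congr rfl (fun i _ => heq i)]
    exact hrow j
  have hSch := schur_bound (Aᴴ * A) K hKnn hrow hcol
  have hsq := norm_sq_eq A
  set T : ℝ := ‖LinearMap.toContinuousLinearMap (Matrix.toEuclideanLin A)‖ with hT
  have hTnn : 0 ≤ T := norm_nonneg _
  have hTT : T * T ≤ K := by rw [hsq]; exact hSch
  have hlogN : Real.log 2 ≤ Real.log N := by
    refine Real.log_le_log (by norm_num) ?_
    exact_mod_cast hN
  have hKle : K ≤ C₁ * Real.log N := by
    have hlogW : Real.log W = Real.log ((M₀ : ℝ) + 2) + Real.log N := by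
      have hWcast : (W : ℝ) = ((M₀ : ℝ) + 2) * N := by rw [hW]; push_cast; ring
      rw [hWcast, Real.log_mul (by positivity) (by positivity)]
    have hKval : K = a + b * Real.log N := by
      rw [hK, ha, hb, hlogW]
      ring
    have haux : a ≤ a / Real.log 2 * Real.log N := by
      have h0 : 0 ≤ a / Real.log 2 := by positivity
      have h1 : a / Real.log 2 * Real.log 2 = a := by field_simp
      nlinarith [mul_le_mul_of_nonneg_left hlogN h0]
    rw [hKval, hC₁]
    nlinarith [haux]
  have hfinal : T * T ≤ C₁ * Real.log N := le_trans hTT hKle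
  have hTle : T ≤ Real.sqrt (C₁ * Real.log N) := by
    rw [show T = Real.sqrt (T * T) from (Real.sqrt_mul_self hTnn).symm]
    exact Real.sqrt_le_sqrt hfinal
  calc T ≤ Real.sqrt (C₁ * Real.log N) := hTle
    _ = Real.sqrt C₁ * Real.sqrt (Real.log N) := Real.sqrt_mul (le_of_lt hC₁pos) _
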